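/- Let G be a quantitative reachability game with players P = {0,1,…,t}, vertex set V, initial vertex v_0, and let c ∈ ℕ. If there exists a play π from v_0 that is Visit Val*-consistent for P∖{0} and satisfies cost_0(π) ≤ c, then there exists a lasso play π′ = μ(ν)^ω from v_0 that is Visit Val*-consistent for P∖{0}, satisfies cost_0(π′) ≤ c, and has |μ| ≤ (|P|+1)·|V| and |ν| ≤ |V|. -/

import Mathlib

open scoped Classical

/-- An infinite play in the graph with edge relation `E`. -/
def IsPlay {V : Type*} (E : V → V → Prop) (π : ℕ → V) : Prop :=
  ∀ k, E (π k) (π (k + 1))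

/-- The history `π 0, …, π k` as a list. -/
def histList {V : Type*} (π : ℕ → V) (k : ℕ) : List V :=
  (List.range (k + 1)).map π

/-- The accumulated weight of the first `n` edges of `π`. -/
def pathWeight {V : Type*} (w : V → V → ℕ) (π : ℕ → V) (n : ℕ) : ℕ :=
  ∑ j ∈ Finset.range n, w (π j) (π (j + 1))

/-- The cost of a play for weight function `w` and target set `T`. -/
noncomputable def cost {V : Type*} (w : V → V → ℕ) (T : Set V) (π : ℕ → V) : ℕ∞ :=
  if h : ∃ n, π n ∈ T then (pathWeight w π (Nat.find h) : ℕ∞) else ⊤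

/-- `σ` is a strategy for player `i` in a game where `own v` is the owner of `v`. -/
def IsStrategyFor {V P : Type*} (E : V → V → Prop) (own : V → P) (i : P)
    (σ : List V → V) : Prop :=
  ∀ (l : List V) (u : V), List.Chain' E (l ++ [u]) → own u = i → E u (σ (l ++ [u]))

/-- A play is consistent with the strategy `σ` of player `i`. -/
def ConsistentFor {V P : Type*} (own : V → P) (i : P) (σ : List V → V)
    (π : ℕ → V) : Prop :=
  ∀ k, own (π k) = i → π (k + 1) = σ (histList π k)

/-- A play is the outcome of the strategy profile `σ`: at each step the owner's
strategy chooses the next vertex. -/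
def ProfConsistent {V P : Type*} (own : V → P) (σ : P → List V → V)
    (π : ℕ → V) : Prop :=
  ∀ k, π (k + 1) = σ (own (π k)) (histList π k)

/-- The value `Val_i(v)` of vertex `v` for player `i` against the coalition of the
other players: the inf over strategies of player `i` of the sup of the costs of the
plays from `v` consistent with that strategy. -/
noncomputable def Val {V P : Type*} (E : V → V → Prop) (own : V → P)
    (w : P → V → V → ℕ) (T : P → Set V) (i : P) (v : V) : ℕ∞ :=
  ⨅ σ : {σ : List V → V // IsStrategyFor E own i σ},
    ⨆ π : {π : ℕ → V // IsPlay E π ∧ π 0 = v ∧ ConsistentFor own i σ.1 π},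
      cost (w i) (T i) π.1

/-- `π` is Visit `Val*`-consistent for the set `I` of players. -/
def VisitValConsistent {V P : Type*} (E : V → V → Prop) (own : V → P)
    (w : P → V → V → ℕ) (T : P → Set V) (I : Set P) (π : ℕ → V) : Prop :=
  ∀ i ∈ I, ∀ n, own (π n) = i → (¬ ∃ k < n, π k ∈ T i) →
    cost (w i) (T i) (fun m => π (n + m)) ≤ Val E own w T i (π n)


/-- `π` is a lasso `μ (ν)^ω` where `|μ| = a` and `|ν| = b`. -/
def IsLasso {V : Type*} (π : ℕ → V) (a b : ℕ) : Prop :=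
  0 < b ∧ ∀ k, a ≤ k → π (k + b) = π k


section Aux

variable {V : Type*} {P : Type*} [Fintype P]

noncomputable def fstVisit (π : ℕ → V) (S : Set V) : ℕ :=
  if h : ∃ n, π n ∈ S then Nat.find h else 0

lemma fstVisit_mem {π : ℕ → V} {S : Set V} (h : ∃ n, π n ∈ S) :
    π (fstVisit π S) ∈ S := by
  rw [fstVisit, dif_pos h]; exact Nat.find_spec h

lemma fstVisit_min (π : ℕ → V) (S : Set V) {m : ℕ}
    (hm : m < fstVisit π S) : π m ∉ S := by
  rw [fstVisit] at hm
  split_ifs at hm with h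
  · exact Nat.find_min h hm
  · omega

noncomputable def evts (π : ℕ → V) (T : P → Set V) (j : ℕ) : Finset ℕ :=
  insert j (Finset.image (fun i => fstVisit π (T i)) Finset.univ)

noncomputable def nxt (π : ℕ → V) (T : P → Set V) (j m : ℕ) : ℕ :=
  if h : ((evts π T j).filter (fun e => m ≤ e)).Nonempty
  then ((evts π T j).filter (fun e => m ≤ e)).min' h else m

lemma le_nxt (π : ℕ → V) (T : P → Set V) (j m : ℕ) : m ≤ nxt π T j m := by
  rw [nxt]; split_ifs with h
  · have := Finset.min'_mem _ h
    simp only [Finset.mem_filter] at this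
    exact this.2
  · exact le_rfl

lemma nxt_le (π : ℕ → V) (T : P → Set V) (j : ℕ) {m e : ℕ}
    (he : e ∈ evts π T j) (hme : m ≤ e) : nxt π T j m ≤ e := by
  have hne : ((evts π T j).filter (fun e => m ≤ e)).Nonempty :=
    ⟨e, Finset.mem_filter.2 ⟨he, hme⟩⟩
  rw [nxt, dif_pos hne]
  exact Finset.min'_le _ _ (Finset.mem_filter.2 ⟨he, hme⟩)

lemma nxt_mem (π : ℕ → V) (T : P → Set V) (j : ℕ) {m e : ℕ}
    (he : e ∈ evts π T j) (hme : m ≤ e) : nxt π T j m ∈ evts π T j := by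
  have hne : ((evts π T j).filter (fun e => m ≤ e)).Nonempty :=
    ⟨e, Finset.mem_filter.2 ⟨he, hme⟩⟩
  rw [nxt, dif_pos hne]
  exact (Finset.mem_filter.1 (Finset.min'_mem _ hne)).1

lemma nxt_eq_self (π : ℕ → V) (T : P → Set V) (j m : ℕ)
    (h : ∀ e ∈ evts π T j, e ≤ m) : nxt π T j m = m := by
  rw [nxt]; split_ifs with hne
  · have hm := Finset.min'_mem _ hne
    rw [Finset.mem_filter] at hm
    exact le_antisymm (h _ hm.1) hm.2
  · rfl

noncomputable def jmp (π : ℕ → V) (T : P → Set V) (j m : ℕ) : ℕ :=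
  ((Finset.Icc m (nxt π T j m)).filter (fun m' => π m' = π m)).max'
    ⟨m, by simp [Finset.mem_filter, Finset.mem_Icc, le_nxt π T j m]⟩

lemma le_jmp (π : ℕ → V) (T : P → Set V) (j m : ℕ) : m ≤ jmp π T j m := by
  apply Finset.le_max'
  simp [Finset.mem_filter, Finset.mem_Icc, le_nxt π T j m]

lemma jmp_le_nxt (π : ℕ → V) (T : P → Set V) (j m : ℕ) :
    jmp π T j m ≤ nxt π T j m := by
  have := Finset.max'_mem ((Finset.Icc m (nxt π T j m)).filter (fun m' => π m' = π m))
    ⟨m, by simp [Finset.mem_filter, Finset.mem_Icc, le_nxt π T j m]⟩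
  rw [Finset.mem_filter, Finset.mem_Icc] at this
  exact this.1.2

lemma pi_jmp (π : ℕ → V) (T : P → Set V) (j m : ℕ) :
    π (jmp π T j m) = π m := by
  have := Finset.max'_mem ((Finset.Icc m (nxt π T j m)).filter (fun m' => π m' = π m))
    ⟨m, by simp [Finset.mem_filter, Finset.mem_Icc, le_nxt π T j m]⟩
  rw [Finset.mem_filter] at this
  exact this.2

lemma le_jmp_of (π : ℕ → V) (T : P → Set V) (j : ℕ) {m m' : ℕ}
    (h1 : m ≤ m') (h2 : m' ≤ nxt π T j m) (h3 : π m' = π m) :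
    m' ≤ jmp π T j m := by
  apply Finset.le_max'
  rw [Finset.mem_filter, Finset.mem_Icc]
  exact ⟨⟨h1, h2⟩, h3⟩

lemma jmp_eq_self (π : ℕ → V) (T : P → Set V) (j m : ℕ)
    (h : ∀ e ∈ evts π T j, e ≤ m) : jmp π T j m = m :=
  le_antisymm (le_trans (jmp_le_nxt π T j m) (le_of_eq (nxt_eq_self π T j m h)))
    (le_jmp π T j m)

noncomputable def gg (π : ℕ → V) (T : P → Set V) (j : ℕ) : ℕ → ℕ
  | 0 => 0
  | n + 1 => jmp π T j (gg π T j n) + 1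

lemma gg_zero (π : ℕ → V) (T : P → Set V) (j : ℕ) : gg π T j 0 = 0 := rfl

lemma gg_succ (π : ℕ → V) (T : P → Set V) (j n : ℕ) :
    gg π T j (n + 1) = jmp π T j (gg π T j n) + 1 := rfl

lemma gg_strictMono (π : ℕ → V) (T : P → Set V) (j : ℕ) :
    StrictMono (gg π T j) := by
  apply strictMono_nat_of_lt_succ
  intro n
  rw [gg_succ]
  exact Nat.lt_succ_of_le (le_jmp π T j _)

lemma gg_id_le (π : ℕ → V) (T : P → Set V) (j n : ℕ) : n ≤ gg π T j n :=
  (gg_strictMono π T j).le_apply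

lemma gg_keep (π : ℕ → V) (T : P → Set V) (j : ℕ)
    (Hgood : ∀ e ∈ evts π T j, ∀ m < e, π m = π e →
      ∃ e' ∈ evts π T j, m ≤ e' ∧ e' < e)
    {e : ℕ} (he : e ∈ evts π T j) : ∃ n, gg π T j n = e := by
  have hex : ∃ n, e < gg π T j n :=
    ⟨e + 1, lt_of_lt_of_le (Nat.lt_succ_self e) (gg_id_le π T j (e + 1))⟩
  have hN := Nat.find_spec hex
  set N := Nat.find hex with hNdef
  match hN' : N with
  | 0 => rw [gg_zero] at hN; omega
  | N' + 1 =>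
    have h2 : ¬ e < gg π T j N' := Nat.find_min hex (by omega : N' < Nat.find hex)
    push_neg at h2
    rcases eq_or_lt_of_le h2 with heq | hlt
    · exact ⟨N', heq⟩
    · exfalso
      rw [gg_succ] at hN
      have hj1 : e ≤ jmp π T j (gg π T j N') := by omega
      have hj2 : jmp π T j (gg π T j N') ≤ e :=
        le_trans (jmp_le_nxt π T j _) (nxt_le π T j he h2)
      have hje : jmp π T j (gg π T j N') = e := le_antisymm hj2 hj1
      have hpi : π (gg π T j N') = π e := by
        rw [← hje]; exact (pi_jmp π T j (gg π T j N')).symm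
      obtain ⟨e', he', hle, hlt'⟩ := Hgood e he (gg π T j N') hlt hpi
      have := nxt_le π T j he' hle
      have := jmp_le_nxt π T j (gg π T j N')
      omega

lemma gg_count [Fintype V] (π : ℕ → V) (T : P → Set V) (j : ℕ) {N : ℕ}
    (hN : ∀ n < N, ∃ e ∈ evts π T j, gg π T j n ≤ e) :
    N ≤ (evts π T j).card * Fintype.card V := by
  have key : ∀ n n', n < n' → n' < N →
      (nxt π T j (gg π T j n), π (gg π T j n)) ≠
        (nxt π T j (gg π T j n'), π (gg π T j n')) := by
    intro n n' hlt hn' hEq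
    rw [Prod.mk.injEq] at hEq
    have h1 : gg π T j n' ≤ nxt π T j (gg π T j n) := by
      rw [hEq.1]; exact le_nxt π T j _
    have h2 : gg π T j n ≤ gg π T j n' := (gg_strictMono π T j).monotone hlt.le
    have h3 : gg π T j n' ≤ jmp π T j (gg π T j n) :=
      le_jmp_of π T j h2 h1 hEq.2.symm
    have h4 : gg π T j (n + 1) ≤ gg π T j n' :=
      (gg_strictMono π T j).monotone hlt
    rw [gg_succ] at h4
    omega
  have hcard : (Finset.range N).card ≤
      ((evts π T j) ×ˢ (Finset.univ : Finset V)).card := by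
    apply Finset.card_le_card_of_injOn
      (fun n => (nxt π T j (gg π T j n), π (gg π T j n)))
    · intro n hn
      rw [Finset.mem_coe, Finset.mem_range] at hn
      obtain ⟨e, he, hge⟩ := hN n hn
      rw [Finset.mem_coe, Finset.mem_product]
      exact ⟨nxt_mem π T j he hge, Finset.mem_univ _⟩
    · intro n hn n' hn' hEq
      rw [Finset.mem_coe, Finset.mem_range] at hn hn'
      rcases lt_trichotomy n n' with h | h | h
      · exact absurd hEq (key n n' h hn')
      · exact h
      · exact absurd hEq.symm (key n' n h hn)
  rwa [Finset.card_range, Finset.card_product, Finset.card_univ] at hcard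

lemma gg_sum_compress (w : V → V → ℕ) (π : ℕ → V) (T : P → Set V) (j : ℕ)
    (n1 : ℕ) : ∀ n2, n1 ≤ n2 →
    ∑ m ∈ Finset.Ico n1 n2, w (π (gg π T j m)) (π (gg π T j (m + 1))) ≤
      ∑ m ∈ Finset.Ico (gg π T j n1) (gg π T j n2), w (π m) (π (m + 1)) := by
  intro n2 h
  induction n2, h using Nat.le_induction with
  | base => simp
  | succ n2 h ih =>
    rw [Finset.sum_Ico_succ_top h]
    rw [← Finset.sum_Ico_consecutive (fun m => w (π m) (π (m + 1)))
      ((gg_strictMono π T j).monotone h)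
      ((gg_strictMono π T j).monotone (Nat.le_succ n2))]
    apply add_le_add ih
    have hmem : jmp π T j (gg π T j n2) ∈
        Finset.Ico (gg π T j n2) (gg π T j (n2 + 1)) := by
      rw [Finset.mem_Ico, gg_succ]
      exact ⟨le_jmp π T j _, Nat.lt_succ_self _⟩
    have hs := Finset.single_le_sum (f := fun m => w (π m) (π (m + 1)))
      (fun i _ => Nat.zero_le _) hmem
    simpa [pi_jmp, gg_succ] using hs

end Aux

/-- If there is a play from `v0` that is Visit `Val*`-consistent for the players
`≠ 0` with `cost₀ ≤ c`, then there is such a lasso play `μ (ν)^ω` with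
`|μ| ≤ (|P|+1)·|V|` and `|ν| ≤ |V|` (here `|P| = t+1`). -/
theorem visit_val_consistent_lasso {V : Type*} [Fintype V] {t : ℕ}
    (E : V → V → Prop) (hE : ∀ u, ∃ v, E u v) (own : V → Fin (t + 1))
    (w : Fin (t + 1) → V → V → ℕ) (T : Fin (t + 1) → Set V) (v0 : V) (c : ℕ)
    (h : ∃ π : ℕ → V, IsPlay E π ∧ π 0 = v0 ∧
      VisitValConsistent E own w T {i | i ≠ 0} π ∧ cost (w 0) (T 0) π ≤ (c : ℕ∞)) :
    ∃ (π' : ℕ → V) (a b : ℕ), IsPlay E π' ∧ π' 0 = v0 ∧ IsLasso π' a b ∧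
      VisitValConsistent E own w T {i | i ≠ 0} π' ∧ cost (w 0) (T 0) π' ≤ (c : ℕ∞) ∧
      a ≤ ((t + 1) + 1) * Fintype.card V ∧ b ≤ Fintype.card V := by
  obtain ⟨π, hplay, hπ0, hVVC, hcost⟩ := h
  -- player 0 visits its target
  have hex0 : ∃ n, π n ∈ T 0 := by
    by_contra hno
    rw [cost, dif_neg hno] at hcost
    exact (ENat.coe_lt_top c).not_ge hcost
  set B := Finset.univ.sup (fun i : Fin (t + 1) => fstVisit π (T i)) with hBdef
  have hfiB : ∀ i : Fin (t + 1), fstVisit π (T i) ≤ B := by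
    intro i; rw [hBdef]
    exact Finset.le_sup (f := fun i : Fin (t+1) => fstVisit π (T i)) (Finset.mem_univ i)
  -- pigeonhole: a repeated vertex in a window of length |V|+1 after B
  have hQ : ∃ x, B ≤ x ∧ ∃ y, x < y ∧ y ≤ B + Fintype.card V ∧ π y = π x := by
    have hcard : Fintype.card V < Fintype.card (Fin (Fintype.card V + 1)) := by simp
    obtain ⟨d₁, d₂, hne, heq⟩ := Fintype.exists_ne_map_eq_of_card_lt
      (fun d : Fin (Fintype.card V + 1) => π (B + (d : ℕ))) hcard
    rcases lt_trichotomy (d₁ : ℕ) (d₂ : ℕ) with hlt | hEq | hgt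
    · exact ⟨B + (d₁ : ℕ), Nat.le_add_right _ _, B + (d₂ : ℕ), by omega,
        by have := d₂.isLt; omega, heq.symm⟩
    · exact absurd (Fin.ext hEq) hne
    · exact ⟨B + (d₂ : ℕ), Nat.le_add_right _ _, B + (d₁ : ℕ), by omega,
        by have := d₁.isLt; omega, heq⟩
  set j := Nat.find hQ with hjdef
  obtain ⟨hBj, k, hjk, hkB, hπk⟩ := Nat.find_spec hQ
  have hjmin : ∀ x, x < j →
      ¬(B ≤ x ∧ ∃ y, x < y ∧ y ≤ B + Fintype.card V ∧ π y = π x) :=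
    fun x hx => Nat.find_min hQ hx
  set b := k - j with hbdef
  have hk : k = j + b := by omega
  have hbpos : 0 < b := by omega
  have hbV : b ≤ Fintype.card V := by omega
  -- the event set
  have hjEv : j ∈ evts π T j := Finset.mem_insert_self _ _
  have hfiEv : ∀ i : Fin (t + 1), fstVisit π (T i) ∈ evts π T j :=
    fun i => Finset.mem_insert_of_mem (Finset.mem_image_of_mem _ (Finset.mem_univ i))
  have hEvle : ∀ e ∈ evts π T j, e ≤ j := by
    intro e he
    rcases Finset.mem_insert.1 he with rfl | hmem
    · exact le_rfl
    · obtain ⟨i, _, rfl⟩ := Finset.mem_image.1 hmem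
      exact le_trans (hfiB i) hBj
  have Hgood : ∀ e ∈ evts π T j, ∀ m < e, π m = π e →
      ∃ e' ∈ evts π T j, m ≤ e' ∧ e' < e := by
    intro e he m hm hpi
    obtain ⟨i0, -, hBi⟩ := Finset.exists_mem_eq_sup Finset.univ
      ⟨0, Finset.mem_univ (0 : Fin (t + 1))⟩ (fun i : Fin (t + 1) => fstVisit π (T i))
    rcases Finset.mem_insert.1 he with rfl | hmem
    · -- e = j
      by_cases hBe : B < j
      · rcases le_or_gt m B with hmB | hBm
        · refine ⟨B, ?_, hmB, hBe⟩
          rw [hBdef, hBi]; exact hfiEv i0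
        · exact absurd ⟨hBm.le, j, hm, by omega, hpi.symm⟩ (hjmin m hm)
      · -- B = j
        exfalso
        have hBj' : B = j := le_antisymm hBj (not_lt.1 hBe)
        have hji0 : j = fstVisit π (T i0) := by rw [← hBj', hBdef, hBi]
        by_cases hvis : ∃ n, π n ∈ T i0
        · refine fstVisit_min π (T i0) (m := m) (by rw [← hji0]; exact hm) ?_
          rw [hpi, hji0]; exact fstVisit_mem hvis
        · rw [hji0, fstVisit, dif_neg hvis] at hm; omega
    · obtain ⟨i, -, rfl⟩ := Finset.mem_image.1 hmem
      exfalso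
      by_cases hvis : ∃ n, π n ∈ T i
      · exact fstVisit_min π (T i) hm (by rw [hpi]; exact fstVisit_mem hvis)
      · rw [fstVisit, dif_neg hvis] at hm; omega
  have hkeep : ∀ e ∈ evts π T j, ∃ n, gg π T j n = e :=
    fun e he => gg_keep π T j Hgood he
  obtain ⟨a, hga⟩ := hkeep j hjEv
  -- behavior after a
  have gadd : ∀ q, gg π T j (a + q) = j + q := by
    intro q
    induction q with
    | zero => simpa using hga
    | succ q ih =>
      rw [show a + (q + 1) = (a + q) + 1 from rfl, gg_succ, ih,
        jmp_eq_self π T j (j + q) (fun e he => le_trans (hEvle e he) (Nat.le_add_right j q))]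
      omega
  -- counting
  have haN : a ≤ ((t + 1) + 1) * Fintype.card V := by
    have h1 : a ≤ (evts π T j).card * Fintype.card V := by
      apply gg_count
      intro n hn
      exact ⟨j, hjEv, by have := gg_strictMono π T j hn; omega⟩
    have h2 : (evts π T j).card ≤ (t + 1) + 1 := by
      refine le_trans (Finset.card_insert_le _ _) ?_
      have h3 := Finset.card_image_le (s := (Finset.univ : Finset (Fin (t + 1))))
        (f := fun i : Fin (t + 1) => fstVisit π (T i))
      simp only [Finset.card_univ, Fintype.card_fin] at h3
      omega
    exact le_trans h1 (Nat.mul_le_mul_right _ h2)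
  -- the compressed lasso play
  set r : ℕ → ℕ := fun n => if n ≤ a then n else a + (n - a) % b with hrdef
  have hr_id : ∀ n, n ≤ a → r n = n := fun n hn => if_pos hn
  have hr_tail : ∀ n, a ≤ n → r n = a + (n - a) % b := by
    intro n hn
    rcases eq_or_lt_of_le hn with rfl | hlt
    · simp [hrdef]
    · exact if_neg (by omega)
  have hr_le : ∀ n, r n ≤ n := by
    intro n
    rw [hrdef]; dsimp only
    split_ifs with hn
    · exact le_rfl
    · have := Nat.mod_le (n - a) b; omega
  have hr_per : ∀ n, a ≤ n → r (n + b) = r n := by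
    intro n hn
    rw [hr_tail _ (by omega), hr_tail _ hn, show n + b - a = (n - a) + b by omega,
      Nat.add_mod_right]
  -- helper: positions ≤ a of events
  have hle_a : ∀ i : Fin (t + 1), ∀ n2, gg π T j n2 = fstVisit π (T i) → n2 ≤ a := by
    intro i n2 hn2
    have : gg π T j n2 ≤ gg π T j a := by
      rw [hn2, hga]; exact le_trans (hfiB i) hBj
    exact (gg_strictMono π T j).le_iff_le.1 this
  refine ⟨fun n => π (gg π T j (r n)), a, b, ?_, ?_, ⟨hbpos, ?_⟩, ?_, ?_, haN, hbV⟩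
  · -- IsPlay
    intro n
    dsimp only
    rcases lt_or_ge n a with hna | hna
    · have h5 : π (jmp π T j (gg π T j n)) = π (gg π T j n) := pi_jmp π T j _
      rw [hr_id n (by omega), hr_id (n + 1) (by omega), gg_succ, ← h5]
      exact hplay _
    · have hq := Nat.mod_lt (n - a) hbpos
      have h1 : r n = a + (n - a) % b := hr_tail n hna
      have h3 : r (n + 1) = a + ((n - a) % b + 1) % b := by
        rw [hr_tail (n + 1) (by omega), show n + 1 - a = (n - a) + 1 by omega,
          ← Nat.mod_add_mod]
      rcases eq_or_lt_of_le (show (n - a) % b + 1 ≤ b by omega) with he | hl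
      · -- wrap around
        have h6 : ((n - a) % b + 1) % b = 0 := by rw [he]; exact Nat.mod_self b
        rw [h1, h3, h6, gadd, gadd]
        have : π j = π (j + (n - a) % b + 1) → E (π (j + (n - a) % b)) (π j) := by
          intro hpe; rw [hpe]; exact hplay (j + (n - a) % b)
        apply this
        rw [← hπk, hk]; congr 1; omega
      · rw [h1, h3, Nat.mod_eq_of_lt hl, gadd, gadd, show j + ((n - a) % b + 1) = (j + (n - a) % b) + 1 by omega]
        exact hplay _
  · -- starts at v0
    dsimp only
    rw [hr_id 0 (Nat.zero_le a), gg_zero, hπ0]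
  · -- periodicity
    intro m hm
    dsimp only
    rw [hr_per m hm]
  · -- Visit Val* consistency
    intro i hi n h_own h_nov
    dsimp only at h_own ⊢
    set p := gg π T j (r n) with hp
    have h_nov_p : ¬ ∃ l, l < p ∧ π l ∈ T i := by
      rintro ⟨l, hl, hlT⟩
      have hvis : ∃ n, π n ∈ T i := ⟨l, hlT⟩
      have hfl : fstVisit π (T i) ≤ l := by
        by_contra hc; push_neg at hc
        exact fstVisit_min π (T i) hc hlT
      obtain ⟨n2, hn2⟩ := hkeep _ (hfiEv i)
      have hn2a : n2 ≤ a := hle_a i n2 hn2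
      have hn2rn : n2 < r n := (gg_strictMono π T j).lt_iff_lt.1
        (by rw [hn2, ← hp]; exact lt_of_le_of_lt hfl hl)
      refine h_nov ⟨n2, lt_of_lt_of_le hn2rn (hr_le n), ?_⟩
      show π (gg π T j (r n2)) ∈ T i
      rw [hr_id n2 hn2a, hn2]; exact fstVisit_mem hvis
    have hVal := hVVC i hi p h_own h_nov_p
    by_cases hvis : ∃ m, π m ∈ T i
    · by_cases htn : π p ∈ T i
      · have hex' : ∃ q, π (gg π T j (r (n + q))) ∈ T i := ⟨0, by simpa using htn⟩
        rw [cost, dif_pos hex']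
        have hfz : Nat.find hex' = 0 := (Nat.find_eq_zero hex').2 (by simpa using htn)
        rw [hfz]
        simp [pathWeight]
      · -- the hard case
        have hpfi' : p ≤ fstVisit π (T i) := by
          by_contra hc2; push_neg at hc2
          exact h_nov_p ⟨_, hc2, fstVisit_mem hvis⟩
        have hna : n < a := by
          by_contra hc; push_neg at hc
          have hq2 : r n = a + (n - a) % b := hr_tail n hc
          have hpj : j ≤ p := by rw [hp, hq2, gadd]; omega
          have hfj : fstVisit π (T i) ≤ j := le_trans (hfiB i) hBj
          have hpf : p = fstVisit π (T i) := by omega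
          exact htn (hpf ▸ fstVisit_mem hvis)
        have hrn : r n = n := hr_id n hna.le
        have hpfi : p < fstVisit π (T i) := by
          rcases eq_or_lt_of_le hpfi' with he | hl
          · exact absurd (he ▸ fstVisit_mem hvis) htn
          · exact hl
        obtain ⟨ni, hgni⟩ := hkeep _ (hfiEv i)
        have hnia : ni ≤ a := hle_a i ni hgni
        have hnni : n < ni := (gg_strictMono π T j).lt_iff_lt.1
          (by rw [hgni, ← hrn, ← hp]; exact hpfi)
        have hex' : ∃ q, π (gg π T j (r (n + q))) ∈ T i :=
          ⟨ni - n, by rw [Nat.add_sub_cancel' hnni.le, hr_id ni hnia, hgni]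
                      exact fstVisit_mem hvis⟩
        rw [cost, dif_pos hex']
        have hfind : Nat.find hex' ≤ ni - n := Nat.find_le
          (by rw [Nat.add_sub_cancel' hnni.le, hr_id ni hnia, hgni]
              exact fstVisit_mem hvis)
        have c1 : pathWeight (w i) (fun m => π (gg π T j (r (n + m)))) (Nat.find hex') ≤
            pathWeight (w i) (fun m => π (gg π T j (r (n + m)))) (ni - n) :=
          Finset.sum_le_sum_of_subset (Finset.range_subset_range.2 hfind)
        have c2 : pathWeight (w i) (fun m => π (gg π T j (r (n + m)))) (ni - n) =
            ∑ m ∈ Finset.Ico n ni, w i (π (gg π T j m)) (π (gg π T j (m + 1))) := by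
          rw [Finset.sum_Ico_eq_sum_range, pathWeight]
          apply Finset.sum_congr rfl
          intro l hl
          rw [Finset.mem_range] at hl
          rw [show n + (l + 1) = n + l + 1 from rfl,
            hr_id (n + l) (by omega), hr_id (n + l + 1) (by omega)]
        have c3 := gg_sum_compress (w i) π T j n ni hnni.le
        have c4 : ∑ m ∈ Finset.Ico (gg π T j n) (gg π T j ni), w i (π m) (π (m + 1)) =
            pathWeight (w i) (fun m => π (p + m)) (fstVisit π (T i) - p) := by
          rw [Finset.sum_Ico_eq_sum_range, pathWeight, hgni, hp, hrn]
          apply Finset.sum_congr rfl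
          intro l _
          rw [show gg π T j n + l + 1 = gg π T j n + (l + 1) from rfl]
        have hex2 : ∃ q, π (p + q) ∈ T i :=
          ⟨fstVisit π (T i) - p, by rw [Nat.add_sub_cancel' hpfi.le]
                                    exact fstVisit_mem hvis⟩
        rw [cost, dif_pos hex2] at hVal
        have hfind2 : Nat.find hex2 = fstVisit π (T i) - p := by
          rw [Nat.find_eq_iff]
          refine ⟨by rw [Nat.add_sub_cancel' hpfi.le]; exact fstVisit_mem hvis, ?_⟩
          intro q hq
          exact fstVisit_min π (T i) (by omega)
        rw [hfind2] at hVal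
        refine le_trans ?_ hVal
        have := le_trans c1 (le_of_eq c2)
        have := le_trans this (le_trans c3 (le_of_eq c4))
        exact_mod_cast this
    · -- player i never visits its target in π
      have htop : cost (w i) (T i) (fun m => π (p + m)) = ⊤ := by
        rw [cost, dif_neg]
        rintro ⟨q, hq⟩
        exact hvis ⟨p + q, hq⟩
      rw [htop] at hVal
      exact (top_le_iff.1 hVal) ▸ le_top
  · -- cost of player 0
    obtain ⟨n0, hgn0⟩ := hkeep (fstVisit π (T 0)) (hfiEv 0)
    have hn0a : n0 ≤ a := hle_a 0 n0 hgn0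
    have hvis' : ∃ n, π (gg π T j (r n)) ∈ T 0 :=
      ⟨n0, by rw [hr_id n0 hn0a, hgn0]; exact fstVisit_mem hex0⟩
    rw [cost, dif_pos hvis']
    rw [cost, dif_pos hex0] at hcost
    have hfind : Nat.find hvis' ≤ n0 := Nat.find_le
      (by rw [hr_id n0 hn0a, hgn0]; exact fstVisit_mem hex0)
    have c1 : pathWeight (w 0) (fun n => π (gg π T j (r n))) (Nat.find hvis') ≤
        pathWeight (w 0) (fun n => π (gg π T j (r n))) n0 :=
      Finset.sum_le_sum_of_subset (Finset.range_subset_range.2 hfind)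
    have c2 : pathWeight (w 0) (fun n => π (gg π T j (r n))) n0 =
        ∑ m ∈ Finset.Ico 0 n0, w 0 (π (gg π T j m)) (π (gg π T j (m + 1))) := by
      rw [pathWeight, ← Finset.range_eq_Ico]
      apply Finset.sum_congr rfl
      intro l hl
      rw [Finset.mem_range] at hl
      rw [hr_id l (by omega), hr_id (l + 1) (by omega)]
    have c3 : ∑ m ∈ Finset.Ico 0 n0, w 0 (π (gg π T j m)) (π (gg π T j (m + 1))) ≤
        pathWeight (w 0) π (Nat.find hex0) := by
      have := gg_sum_compress (w 0) π T j 0 n0 (Nat.zero_le n0)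
      rw [gg_zero, hgn0] at this
      rw [pathWeight, ← Finset.range_eq_Ico] at *
      refine le_trans this (le_of_eq ?_)
      rw [fstVisit, dif_pos hex0]
      rw [Finset.range_eq_Ico]
    refine le_trans ?_ hcost
    exact_mod_cast le_trans c1 (le_trans (le_of_eq c2) c3)
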